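/- Let G = (V,E) be a graph and (A, V\A) a cut of neighbourhood diversity at most k with module partition A_1,…,A_k of A and B_i = N_G(A_i) \ A. Then for every u,v ∉ A, d_G(u,v) = min( d_{G[V\A]}(u,v), min over 1 ≤ i ≤ k of (d_G(u,A_i) + 1 + d_G(B_i,v)) ). -/
import Mathlib


open scoped Classical

/-- `setEDist G u S` is the distance in `G` from the vertex `u` to the set `S`,
namely `min_{s ∈ S} d_G(u,s)`, with value `⊤` (i.e. `+∞`) when `S = ∅`. -/
noncomputable def setEDist {V : Type*} (G : SimpleGraph V) (u : V) (S : Set V) : ℕ∞ :=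
  ⨅ s ∈ S, G.edist u s

lemma setEDist_le {V : Type*} (G : SimpleGraph V) {u s : V} {S : Set V} (hs : s ∈ S) :
    setEDist G u S ≤ G.edist u s :=
  iInf₂_le s hs

lemma exists_of_setEDist_ne_top {V : Type*} (G : SimpleGraph V) {u : V} {S : Set V}
    (h : setEDist G u S ≠ ⊤) : ∃ s ∈ S, G.edist u s ≤ setEDist G u S := by
  have h1 : setEDist G u S < setEDist G u S + 1 :=
    ENat.lt_add_one_iff h |>.mpr le_rfl
  rw [setEDist, iInf_lt_iff] at h1
  obtain ⟨s, hs⟩ := h1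
  rw [iInf_lt_iff] at hs
  obtain ⟨hsS, hlt⟩ := hs
  exact ⟨s, hsS, (ENat.lt_add_one_iff h).mp hlt⟩

/-- A walk avoiding `A` gives an upper bound on the distance in the induced graph. -/
lemma edist_induce_le_of_walk {V : Type*} (G : SimpleGraph V) (A : Set V) :
    ∀ {x y : V} (p : G.Walk x y) (hp : ∀ z ∈ p.support, z ∉ A),
      (G.induce Aᶜ).edist ⟨x, hp x p.start_mem_support⟩ ⟨y, hp y p.end_mem_support⟩
        ≤ p.length := by
  intro x y p
  induction p with
  | nil =>
    intro hp
    simp [SimpleGraph.edist_self]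
  | @cons x w y h q ih =>
    intro hp
    have hx : x ∉ A := hp x (SimpleGraph.Walk.start_mem_support _)
    have hq : ∀ z ∈ q.support, z ∉ A := fun z hz =>
      hp z (by simp [SimpleGraph.Walk.support_cons, hz])
    have hw : w ∉ A := hq w q.start_mem_support
    have hadj : (G.induce Aᶜ).Adj ⟨x, hx⟩ ⟨w, hw⟩ := by
      simpa using h
    calc (G.induce Aᶜ).edist ⟨x, hx⟩ ⟨y, _⟩
        ≤ (G.induce Aᶜ).edist ⟨x, hx⟩ ⟨w, hw⟩ + (G.induce Aᶜ).edist ⟨w, hw⟩ ⟨y, _⟩ :=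
          SimpleGraph.edist_triangle
      _ ≤ 1 + q.length := by
          gcongr
          · rw [SimpleGraph.edist_eq_one_iff_adj.mpr hadj]
          · exact ih hq
      _ ≤ (q.cons h).length := by
          rw [SimpleGraph.Walk.length_cons]
          push_cast
          rw [add_comm]

/-- If a walk to a vertex outside `A` meets `A`, we can find an exit edge `a ~ b`
with `a ∈ A`, `b ∉ A` bounding distances. -/
lemma exists_exit {V : Type*} (G : SimpleGraph V) (A : Set V) :
    ∀ {x v : V} (p : G.Walk x v), v ∉ A → (∃ z ∈ p.support, z ∈ A) →
      ∃ a b, a ∈ A ∧ b ∉ A ∧ G.Adj a b ∧ G.edist x a + 1 + G.edist b v ≤ p.length := by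
  intro x v p
  induction p with
  | nil =>
    intro hv hz
    obtain ⟨z, hz1, hz2⟩ := hz
    simp only [SimpleGraph.Walk.support_nil, List.mem_singleton] at hz1
    exact absurd (hz1 ▸ hz2) hv
  | @cons x w v h q ih =>
    intro hv hz
    by_cases hqA : ∃ z ∈ q.support, z ∈ A
    · obtain ⟨a, b, ha, hb, hab, hle⟩ := ih hv hqA
      refine ⟨a, b, ha, hb, hab, ?_⟩
      have h1 : G.edist x a ≤ 1 + G.edist w a := by
        calc G.edist x a ≤ G.edist x w + G.edist w a := SimpleGraph.edist_triangle
          _ ≤ 1 + G.edist w a := by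
              gcongr
              rw [SimpleGraph.edist_eq_one_iff_adj.mpr h]
      calc G.edist x a + 1 + G.edist b v
          ≤ (1 + G.edist w a) + 1 + G.edist b v := by gcongr
        _ = 1 + (G.edist w a + 1 + G.edist b v) := by ring
        _ ≤ 1 + (q.length : ℕ∞) := by gcongr
        _ = ((q.cons h).length : ℕ∞) := by
            rw [SimpleGraph.Walk.length_cons]; push_cast; rw [add_comm]
    · obtain ⟨z, hz1, hz2⟩ := hz
      rw [SimpleGraph.Walk.support_cons, List.mem_cons] at hz1
      have hx : x ∈ A := by
        rcases hz1 with rfl | hz1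
        · exact hz2
        · exact absurd ⟨z, hz1, hz2⟩ hqA
      have hw : w ∉ A := fun hw => hqA ⟨w, q.start_mem_support, hw⟩
      refine ⟨x, w, hx, hw, h, ?_⟩
      rw [SimpleGraph.edist_self, zero_add, SimpleGraph.Walk.length_cons]
      push_cast
      rw [add_comm]
      gcongr
      exact SimpleGraph.edist_le q

/-- **Lemma 3.2, third case.** Let `(A, V \ A)` be a cut of neighbourhood diversity at
most `k`, with module partition `A_1, …, A_k` of `A` and `B_i = N_G(A_i) \ A`.  Then for
all `u, v ∉ A`,
`d_G(u,v) = min( d_{G[V \ A]}(u,v), min_{1 ≤ i ≤ k} (d_G(u,A_i) + 1 + d_G(B_i,v)) )`. -/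
theorem dist_formula_outside {V : Type*} [Fintype V] (G : SimpleGraph V)
    (A : Set V) (k : ℕ) (Apart : Fin k → Set V)
    (hcover : (⋃ i, Apart i) = A)
    (hdisj : ∀ i j, i ≠ j → Disjoint (Apart i) (Apart j))
    (hmod : ∀ i, ∀ u ∈ Apart i, ∀ v ∈ Apart i, ∀ x ∉ A, (G.Adj u x ↔ G.Adj v x))
    (B : Fin k → Set V) (hB : ∀ i, B i = {x | x ∉ A ∧ ∃ a ∈ Apart i, G.Adj a x})
    (u v : V) (hu : u ∉ A) (hv : v ∉ A) :
    G.edist u v =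
      min ((G.induce Aᶜ).edist ⟨u, hu⟩ ⟨v, hv⟩)
        (⨅ i : Fin k, (setEDist G u (Apart i) + 1 + setEDist G v (B i))) := by
  apply le_antisymm
  · apply le_min
    · -- `G.edist u v ≤ (G.induce Aᶜ).edist`
      by_cases htop : (G.induce Aᶜ).edist ⟨u, hu⟩ ⟨v, hv⟩ = ⊤
      · rw [htop]; exact le_top
      · obtain ⟨p, hp⟩ := SimpleGraph.exists_walk_of_edist_ne_top htop
        have := SimpleGraph.edist_le (p.map (SimpleGraph.Embedding.induce Aᶜ).toHom)
        rwa [SimpleGraph.Walk.length_map, hp] at this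
    · apply le_iInf
      intro i
      by_cases h1 : setEDist G u (Apart i) = ⊤
      · rw [h1]; simp
      by_cases h2 : setEDist G v (B i) = ⊤
      · rw [h2]; simp
      obtain ⟨a, haA, haE⟩ := exists_of_setEDist_ne_top G h1
      obtain ⟨b, hbB, hbE⟩ := exists_of_setEDist_ne_top G h2
      rw [hB i] at hbB
      obtain ⟨hbA, a', ha'A, ha'b⟩ := hbB
      have hab : G.Adj a b := (hmod i a haA a' ha'A b hbA).mpr ha'b
      calc G.edist u v ≤ G.edist u a + G.edist a v := SimpleGraph.edist_triangle
        _ ≤ G.edist u a + (G.edist a b + G.edist b v) := by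
            gcongr; exact SimpleGraph.edist_triangle
        _ = G.edist u a + 1 + G.edist v b := by
            rw [SimpleGraph.edist_eq_one_iff_adj.mpr hab, SimpleGraph.edist_comm (u := b)]
            ring
        _ ≤ setEDist G u (Apart i) + 1 + setEDist G v (B i) := by gcongr
  · by_cases htop : G.edist u v = ⊤
    · rw [htop]; exact le_top
    obtain ⟨p, hp⟩ := SimpleGraph.exists_walk_of_edist_ne_top htop
    by_cases hA : ∃ z ∈ p.support, z ∈ A
    · obtain ⟨a, b, haA, hbA, hab, hle⟩ := exists_exit G A p hv hA
      rw [hp] at hle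
      obtain ⟨i, hai⟩ : ∃ i, a ∈ Apart i := by
        rw [← hcover] at haA; exact Set.mem_iUnion.mp haA
      have hbBi : b ∈ B i := by rw [hB i]; exact ⟨hbA, a, hai, hab⟩
      refine le_trans (min_le_right _ _) (le_trans (iInf_le _ i) ?_)
      calc setEDist G u (Apart i) + 1 + setEDist G v (B i)
          ≤ G.edist u a + 1 + G.edist v b := by
            gcongr
            · exact setEDist_le G hai
            · exact setEDist_le G hbBi
        _ = G.edist u a + 1 + G.edist b v := by rw [SimpleGraph.edist_comm (u := v)]
        _ ≤ G.edist u v := hle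
    · push_neg at hA
      have := edist_induce_le_of_walk G A p hA
      rw [hp] at this
      exact le_trans (min_le_left _ _) this
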